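/- Fix a partition $\lambda = (\lambda_1,\dots,\lambda_\ell)$ of $n$ with $\ell \le s$ and $\lambda_2 \le c$, and let $\mu = (n/s,\dots,n/s)$. For any two semi-standard Young tableaux $S, T$ of shape $\lambda$ and content $\mu$ with $S < T$ in the row-wise total order (or $S = T$ and $\sigma$ not the identity), and any column permutation $\sigma \in C_\lambda$, there exists a row index $i \in \{2,\dots,\ell\}$ such that the multiset of entries in row $i$ of $S^\sigma$ differs from the multiset of entries in row $i$ of $T$. -/

import Mathlib

open Finset

/-- `lam` (read on `{0, …, ℓ-1}`, 0-indexed) is a partition of `n` with exactly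
`ℓ` (positive) parts. -/
def IsPartitionFn (lam : ℕ → ℕ) (ℓ n : ℕ) : Prop :=
  (∀ i j, i ≤ j → lam j ≤ lam i) ∧ (∀ i, i < ℓ → 0 < lam i) ∧
    (∀ i, ℓ ≤ i → lam i = 0) ∧ (∑ i ∈ Finset.range ℓ, lam i = n)

/-- A semi-standard Young tableau of shape `lam` (with `ℓ` rows) with entries in
`{0, …, s-1}`: rows weakly increase, columns strictly increase. -/
def IsSSYT (lam : ℕ → ℕ) (ℓ s : ℕ) (T : ℕ → ℕ → ℕ) : Prop :=
  (∀ i j, i < ℓ → j + 1 < lam i → T i j ≤ T i (j + 1)) ∧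
  (∀ i j, i + 1 < ℓ → j < lam (i + 1) → T i j < T (i + 1) j) ∧
  (∀ i j, i < ℓ → j < lam i → T i j < s)

/-- The tableau has balanced content `μ = (n/s, …, n/s)`: each value
`v < s` occurs exactly `n/s` times among the cells of the diagram. -/
def HasContentBalanced (lam : ℕ → ℕ) (ℓ s n : ℕ) (T : ℕ → ℕ → ℕ) : Prop :=
  ∀ v, v < s →
    {p : ℕ × ℕ | p.1 < ℓ ∧ p.2 < lam p.1 ∧ T p.1 p.2 = v}.ncard = n / s

/-- The multiset of entries in row `i` of the tableau `T`. -/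
def rowMultiset (lam : ℕ → ℕ) (T : ℕ → ℕ → ℕ) (i : ℕ) : Multiset ℕ :=
  (List.range (lam i)).map fun j => T i j

/-- `π` is a column permutation of the diagram of `lam`: it preserves the
column index, maps cells of the diagram to cells of the diagram, and is the
identity outside the diagram. -/
def IsColPerm (lam : ℕ → ℕ) (ℓ : ℕ) (π : ℕ × ℕ ≃ ℕ × ℕ) : Prop :=
  (∀ p : ℕ × ℕ, (π p).2 = p.2) ∧
  (∀ p : ℕ × ℕ, (p.1 < ℓ ∧ p.2 < lam p.1) → ((π p).1 < ℓ ∧ (π p).2 < lam (π p).1)) ∧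
  (∀ p : ℕ × ℕ, ¬(p.1 < ℓ ∧ p.2 < lam p.1) → π p = p)

/-- The tableau obtained from `T` by rearranging the contents of the cells
according to `π`. -/
def actTab (T : ℕ → ℕ → ℕ) (π : ℕ × ℕ ≃ ℕ × ℕ) : ℕ → ℕ → ℕ :=
  fun i j => T (π.symm (i, j)).1 (π.symm (i, j)).2

/-- The row-wise total order on tableaux of shape `lam` (0-indexed rows; the
relevant row index `i` satisfies `1 ≤ i < ℓ`, i.e. rows `2, …, ℓ` of the
paper). -/
def TabLT (lam : ℕ → ℕ) (ℓ : ℕ) (S T : ℕ → ℕ → ℕ) : Prop :=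
  ∃ i j, 1 ≤ i ∧ i < ℓ ∧ j < lam i ∧
    (∀ k, i < k → k < ℓ → ∀ j', j' < lam k → S k j' = T k j') ∧
    (∀ j', j < j' → j' < lam i → S i j' = T i j') ∧
    S i j < T i j

/-- Claim on SSYTs: if `S, T` are SSYT of shape `lam` (a partition of `n` with
`ℓ ≤ s` parts and `λ₂ ≤ c`) and balanced content, `σ = π ∈ C_λ` is a column
permutation, and either `S < T` in the row-wise order, or `S = T` (on the
diagram) and `π` is not the identity, then some row `i ∈ {2, …, ℓ}` of `S^σ`
and of `T` carry different multisets of entries. -/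
lemma list_sum_eq (g f : ℕ → ℕ) (n : ℕ) :
    (((List.range n).map f).map g).sum = ∑ j ∈ Finset.range n, g (f j) := by
  induction n with
  | zero => simp
  | succ n ih =>
    rw [List.range_succ]
    rw [List.map_map] at ih ⊢
    simp [ih, Finset.sum_range_succ]

lemma rowsum_eq {lam : ℕ → ℕ} {A B : ℕ → ℕ → ℕ} {i : ℕ}
    (h : rowMultiset lam A i = rowMultiset lam B i) (g : ℕ → ℕ) :
    ∑ j ∈ Finset.range (lam i), g (A i j) = ∑ j ∈ Finset.range (lam i), g (B i j) := by
  have h2 := congrArg (fun M : Multiset ℕ => (M.map g).sum) h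
  simpa only [rowMultiset, Multiset.map_coe, Multiset.sum_coe, list_sum_eq] using h2

lemma col_lt {lam : ℕ → ℕ} {ℓ s : ℕ} {S : ℕ → ℕ → ℕ} (hS : IsSSYT lam ℓ s S)
    (hmono : ∀ i j, i ≤ j → lam j ≤ lam i) :
    ∀ m, m < ℓ → ∀ r j, r < m → j < lam m → S r j < S m j := by
  intro m
  induction m with
  | zero => intro _ r j h _; omega
  | succ m ih =>
    intro hm r j hrm hj
    have hstep : S m j < S (m+1) j := hS.2.1 m j hm hj
    rcases Nat.lt_succ_iff_lt_or_eq.mp hrm with h | h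
    · exact lt_trans (ih (by omega) r j h (lt_of_lt_of_le hj (hmono m (m+1) (Nat.le_succ m)))) hstep
    · rw [h]; exact hstep

lemma col_le {lam : ℕ → ℕ} {ℓ s : ℕ} {S : ℕ → ℕ → ℕ} (hS : IsSSYT lam ℓ s S)
    (hmono : ∀ i j, i ≤ j → lam j ≤ lam i) :
    ∀ m, m < ℓ → ∀ r j, r ≤ m → j < lam m → S r j ≤ S m j := by
  intro m hm r j hrm hj
  rcases eq_or_lt_of_le hrm with h | h
  · rw [h]
  · exact le_of_lt (col_lt hS hmono m hm r j h hj)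

lemma row_mono {lam : ℕ → ℕ} {ℓ s : ℕ} {T : ℕ → ℕ → ℕ} (hT : IsSSYT lam ℓ s T)
    {i : ℕ} (hi : i < ℓ) : ∀ j j', j ≤ j' → j' < lam i → T i j ≤ T i j' := by
  intro j j'
  induction j' with
  | zero =>
    intro h _
    have hj : j = 0 := Nat.le_zero.mp h
    rw [hj]
  | succ j' ih =>
    intro h hj'
    by_cases hc : j = j' + 1
    · rw [hc]
    · have h1 : j ≤ j' := by omega
      exact le_trans (ih h1 (by omega)) (hT.1 i j' hi hj')

lemma preimage_le {lam : ℕ → ℕ} {ℓ : ℕ} {π : ℕ × ℕ ≃ ℕ × ℕ} (hπ : IsColPerm lam ℓ π)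
    {k : ℕ} (hfix : ∀ m j, k < m → π (m, j) = (m, j))
    {j : ℕ} (hk : k < ℓ) (hj : j < lam k) :
    ∃ r, r ≤ k ∧ r < ℓ ∧ j < lam r ∧ π.symm (k, j) = (r, j) := by
  have hπq : π (π.symm (k, j)) = (k, j) := π.apply_symm_apply (k, j)
  set q := π.symm (k, j) with hq
  have hcol : q.2 = j := by
    have h1 := hπ.1 q
    rw [hπq] at h1
    exact h1.symm
  by_cases hdiag : q.1 < ℓ ∧ q.2 < lam q.1
  · have hle : q.1 ≤ k := by
      by_contra hgt
      push_neg at hgt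
      have h2 := hfix q.1 q.2 hgt
      rw [Prod.mk.eta, hπq] at h2
      have h3 := congrArg Prod.fst h2
      simp only at h3
      omega
    refine ⟨q.1, hle, hdiag.1, by omega, ?_⟩
    exact Prod.ext rfl hcol
  · have h2 : π q = q := hπ.2.2 q hdiag
    rw [hπq] at h2
    exact ⟨k, le_rfl, hk, hj, h2.symm⟩

lemma fix_rows {lam : ℕ → ℕ} {ℓ s : ℕ} {S : ℕ → ℕ → ℕ} {π : ℕ × ℕ ≃ ℕ × ℕ}
    (hmono : ∀ i j, i ≤ j → lam j ≤ lam i)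
    (hS : IsSSYT lam ℓ s S) (hπ : IsColPerm lam ℓ π) (k : ℕ)
    (hrow : ∀ m, k ≤ m → m < ℓ → rowMultiset lam (actTab S π) m = rowMultiset lam S m) :
    ∀ m j, k ≤ m → π (m, j) = (m, j) := by
  suffices h : ∀ d m, ℓ ≤ m + d → k ≤ m → ∀ j, π (m, j) = (m, j) by
    intro m j hm
    exact h ℓ m (by omega) hm j
  intro d
  induction d with
  | zero =>
    intro m hm _ j
    exact hπ.2.2 (m, j) (show ¬(m < ℓ ∧ j < lam m) by omega)
  | succ d ih =>
    intro m hm hkm j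
    by_cases hmℓ : m < ℓ
    case neg =>
      exact hπ.2.2 (m, j) (show ¬(m < ℓ ∧ j < lam m) by omega)
    have hfixgt : ∀ m' j', m < m' → π (m', j') = (m', j') := fun m' j' h' =>
      ih m' (by omega) (by omega) j'
    have hpre : ∀ j', j' < lam m → ∃ r, r ≤ m ∧ r < ℓ ∧ j' < lam r ∧ π.symm (m, j') = (r, j') :=
      fun j' hj' => preimage_le hπ hfixgt hmℓ hj'
    have hle : ∀ x ∈ Finset.range (lam m), actTab S π m x ≤ S m x := by
      intro x hx
      rw [Finset.mem_range] at hx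
      obtain ⟨r', hr'm, _, _, hpeq'⟩ := hpre x hx
      have hval : actTab S π m x = S r' x := by simp [actTab, hpeq']
      rw [hval]
      exact col_le hS hmono m hmℓ r' x hr'm hx
    have hsum : ∑ j' ∈ Finset.range (lam m), actTab S π m j'
        = ∑ j' ∈ Finset.range (lam m), S m j' := by
      simpa using rowsum_eq (hrow m hkm hmℓ) id
    by_cases hjm : j < lam m
    case neg =>
      exact hπ.2.2 (m, j) (show ¬(m < ℓ ∧ j < lam m) by omega)
    obtain ⟨r, hrm, hrℓ, hjr, hpeq⟩ := hpre j hjm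
    have hreq : r = m := by
      rcases eq_or_lt_of_le hrm with h | h
      · exact h
      · exfalso
        have hval : actTab S π m j = S r j := by simp [actTab, hpeq]
        have hlt : actTab S π m j < S m j := by
          rw [hval]; exact col_lt hS hmono m hmℓ r j h hjm
        have hstrict := Finset.sum_lt_sum hle ⟨j, Finset.mem_range.mpr hjm, hlt⟩
        omega
    rw [hreq] at hpeq
    have h5 := congrArg π hpeq
    rw [Equiv.apply_symm_apply] at h5
    exact h5.symm

theorem stmt11 (s c n ℓ : ℕ) (hs : 0 < s) (hsn : s ∣ n) (lam : ℕ → ℕ)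
    (hlam : IsPartitionFn lam ℓ n) (hℓ : ℓ ≤ s) (hc : lam 1 ≤ c)
    (S T : ℕ → ℕ → ℕ)
    (hS : IsSSYT lam ℓ s S) (hT : IsSSYT lam ℓ s T)
    (hSc : HasContentBalanced lam ℓ s n S) (hTc : HasContentBalanced lam ℓ s n T)
    (π : ℕ × ℕ ≃ ℕ × ℕ) (hπ : IsColPerm lam ℓ π)
    (hord : TabLT lam ℓ S T ∨
      ((∀ i j, i < ℓ → j < lam i → S i j = T i j) ∧ π ≠ Equiv.refl (ℕ × ℕ))) :
    ∃ i, 1 ≤ i ∧ i < ℓ ∧ rowMultiset lam (actTab S π) i ≠ rowMultiset lam T i := by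
  by_contra hcon
  push_neg at hcon
  obtain ⟨hmono, hpos, hzero, hsumn⟩ := hlam
  rcases hord with hlt | ⟨hst, hne⟩
  · obtain ⟨i, j, hi1, hiℓ, hj, habove, hright, hSTij⟩ := hlt
    have hrowS : ∀ m, i + 1 ≤ m → m < ℓ →
        rowMultiset lam (actTab S π) m = rowMultiset lam S m := by
      intro m hm hmℓ
      rw [hcon m (by omega) hmℓ]
      unfold rowMultiset
      congr 1
      apply List.map_congr_left
      intro x hx
      rw [List.mem_range] at hx
      exact (habove m (by omega) hmℓ x hx).symm
    have hfix := fix_rows hmono hS hπ (i + 1) hrowS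
    have hbound : ∀ j', j' < lam i → actTab S π i j' ≤ S i j' := by
      intro j' hj'
      obtain ⟨r, hrm, hrℓ, hjr, hpeq⟩ :=
        preimage_le hπ (fun m' j' h' => hfix m' j' h') hiℓ hj'
      have hval : actTab S π i j' = S r j' := by simp [actTab, hpeq]
      rw [hval]
      exact col_le hS hmono i hiℓ r j' hrm hj'
    have hsum : ∑ j' ∈ Finset.range (lam i), (if T i j ≤ actTab S π i j' then 1 else 0)
        = ∑ j' ∈ Finset.range (lam i), (if T i j ≤ T i j' then 1 else 0) := by
      simpa using rowsum_eq (hcon i hi1 hiℓ) (fun x => if T i j ≤ x then 1 else 0)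
    have hLHS : ∑ j' ∈ Finset.range (lam i), (if T i j ≤ actTab S π i j' then 1 else 0)
        ≤ lam i - (j + 1) := by
      rw [Finset.range_eq_Ico,
        ← Finset.sum_Ico_consecutive _ (Nat.zero_le (j + 1)) (by omega : j + 1 ≤ lam i)]
      have h0 : ∑ j' ∈ Finset.Ico 0 (j + 1), (if T i j ≤ actTab S π i j' then 1 else 0) = 0 := by
        apply Finset.sum_eq_zero
        intro x hx
        rw [Finset.mem_Ico] at hx
        have hxle : x ≤ j := by omega
        have hxlt : actTab S π i x < T i j :=
          lt_of_le_of_lt (le_trans (hbound x (by omega)) (row_mono hS hiℓ x j hxle hj)) hSTij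
        simp [Nat.not_le.mpr hxlt]
      rw [h0, zero_add]
      calc ∑ j' ∈ Finset.Ico (j + 1) (lam i), (if T i j ≤ actTab S π i j' then 1 else 0)
          ≤ ∑ _j' ∈ Finset.Ico (j + 1) (lam i), 1 :=
            Finset.sum_le_sum (fun x _ => by split <;> omega)
        _ = lam i - (j + 1) := by rw [Finset.sum_const, smul_eq_mul, mul_one, Nat.card_Ico]
    have hRHS : lam i - j ≤ ∑ j' ∈ Finset.range (lam i), (if T i j ≤ T i j' then 1 else 0) := by
      have hsub : Finset.Ico j (lam i) ⊆ Finset.range (lam i) := by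
        rw [Finset.range_eq_Ico]
        exact Finset.Ico_subset_Ico (Nat.zero_le _) le_rfl
      calc lam i - j = ∑ _j' ∈ Finset.Ico j (lam i), 1 := by
            rw [Finset.sum_const, smul_eq_mul, mul_one, Nat.card_Ico]
        _ = ∑ j' ∈ Finset.Ico j (lam i), (if T i j ≤ T i j' then 1 else 0) := by
            apply Finset.sum_congr rfl
            intro x hx
            rw [Finset.mem_Ico] at hx
            have hle : T i j ≤ T i x := row_mono hT hiℓ j x hx.1 hx.2
            simp [hle]
        _ ≤ _ := Finset.sum_le_sum_of_subset hsub
    omega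
  · have hrowS : ∀ m, 1 ≤ m → m < ℓ →
        rowMultiset lam (actTab S π) m = rowMultiset lam S m := by
      intro m hm hmℓ
      rw [hcon m hm hmℓ]
      unfold rowMultiset
      congr 1
      apply List.map_congr_left
      intro x hx
      rw [List.mem_range] at hx
      exact (hst m x hmℓ hx).symm
    have hfix := fix_rows hmono hS hπ 1 hrowS
    apply hne
    apply Equiv.ext
    rintro ⟨m, j⟩
    show π (m, j) = (m, j)
    rcases Nat.eq_zero_or_pos m with hm | hm
    · subst hm
      by_cases hd : 0 < ℓ ∧ j < lam 0
      · have hcol : (π (0, j)).2 = j := hπ.1 (0, j)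
        rcases Nat.eq_zero_or_pos (π (0, j)).1 with h0 | h0
        · exact Prod.ext h0 hcol
        · exfalso
          have hfx : π ((π (0, j)).1, (π (0, j)).2) = ((π (0, j)).1, (π (0, j)).2) :=
            hfix _ _ h0
          rw [Prod.mk.eta] at hfx
          have h2 := π.injective hfx
          rw [h2] at h0
          exact Nat.lt_irrefl 0 h0
      · exact hπ.2.2 (0, j) hd
    · exact hfix m j hm
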